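/- arXiv:2007.01478 — 4 statements merged into one kernel-verified Lean document; each statement's English description precedes it below -/
import Mathlib

section
/- For any two real-valued random variables X₁ and X₂ with finite variance (defined on a common probability space), Var(max(X₁, X₂)) ≤ Var(X₁) + Var(X₂). -/
open MeasureTheory ProbabilityTheory

/-- **Lemma A.2**: `Var(max(X₁, X₂)) ≤ Var(X₁) + Var(X₂)`. -/
theorem variance_max_le
    {Ω : Type*} [MeasurableSpace Ω] (μ : Measure Ω) [IsProbabilityMeasure μ]
    (X₁ X₂ : Ω → ℝ) (h₁ : MemLp X₁ 2 μ) (h₂ : MemLp X₂ 2 μ) :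
    variance (fun ω => max (X₁ ω) (X₂ ω)) μ ≤ variance X₁ μ + variance X₂ μ := by
  set Z : Ω → ℝ := fun ω => max (X₁ ω) (X₂ ω) with hZdef
  have hZ : MemLp Z 2 μ := h₁.sup h₂
  set m₁ : ℝ := μ[X₁]
  set m₂ : ℝ := μ[X₂]
  set c : ℝ := max m₁ m₂ with hc
  set W : Ω → ℝ := fun ω => Z ω - c with hW
  have hWmem : MemLp W 2 μ := hZ.sub (memLp_const c)
  have hWint : μ[W] = μ[Z] - c := by
    rw [hW]
    rw [integral_sub (hZ.integrable one_le_two) (integrable_const c)]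
    simp
  -- variance of Z equals variance of W (shift invariance)
  have hvar : variance Z μ = variance W μ := by
    rw [variance_eq_integral hZ.aestronglyMeasurable.aemeasurable, variance_eq_integral hWmem.aestronglyMeasurable.aemeasurable, hWint]
    congr 1
    ext ω
    simp [hW]
  have h1 : variance W μ ≤ μ[W ^ 2] :=
    variance_le_expectation_sq hWmem.aestronglyMeasurable
  have hint1 : Integrable ((fun ω => X₁ ω - m₁) ^ 2) μ :=
    (h₁.sub (memLp_const m₁)).integrable_sq
  have hint2 : Integrable ((fun ω => X₂ ω - m₂) ^ 2) μ :=
    (h₂.sub (memLp_const m₂)).integrable_sq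
  have h2 : μ[W ^ 2] ≤ μ[(fun ω => X₁ ω - m₁) ^ 2] + μ[(fun ω => X₂ ω - m₂) ^ 2] := by
    rw [← integral_add hint1 hint2]
    refine integral_mono hWmem.integrable_sq (hint1.add hint2) fun ω => ?_
    simp only [Pi.pow_apply, Pi.add_apply, hW, hZdef]
    have habs : |max (X₁ ω) (X₂ ω) - max m₁ m₂| ≤ max |X₁ ω - m₁| |X₂ ω - m₂| :=
      abs_max_sub_max_le_max _ _ _ _
    calc (max (X₁ ω) (X₂ ω) - c) ^ 2 = |max (X₁ ω) (X₂ ω) - max m₁ m₂| ^ 2 := by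
          rw [sq_abs, hc]
      _ ≤ (max |X₁ ω - m₁| |X₂ ω - m₂|) ^ 2 := by
          exact pow_le_pow_left₀ (abs_nonneg _) habs 2
      _ ≤ (X₁ ω - m₁) ^ 2 + (X₂ ω - m₂) ^ 2 := by
          rcases max_cases (|X₁ ω - m₁|) (|X₂ ω - m₂|) with ⟨h, _⟩ | ⟨h, _⟩ <;>
            rw [h, sq_abs] <;> nlinarith [sq_nonneg (X₁ ω - m₁), sq_nonneg (X₂ ω - m₂)]
  have e1 : μ[(fun ω => X₁ ω - m₁) ^ 2] = variance X₁ μ := by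
    rw [variance_eq_integral h₁.aestronglyMeasurable.aemeasurable]; rfl
  have e2 : μ[(fun ω => X₂ ω - m₂) ^ 2] = variance X₂ μ := by
    rw [variance_eq_integral h₂.aestronglyMeasurable.aemeasurable]; rfl
  calc variance Z μ = variance W μ := hvar
    _ ≤ μ[W ^ 2] := h1
    _ ≤ _ := h2
    _ = variance X₁ μ + variance X₂ μ := by rw [e1, e2]
end

section
/- Let 0 < η < 1 and let e₁, e₂, e₃ be the first three canonical basis vectors of ℝ³. Define X ∈ ℝ^{3×4} with columns X₁ = (1+η²)^{−1/2}(e₁ + ηe₃), X₂ = (1+η²)^{−1/2}(e₁ − ηe₃), X₃ = 2^{−1/2}(e₁ + e₂), X₄ = e₂, and let Σ̂ := (1/3)XᵀX. With S* = {1,2} and sign(β*_{S*}) = (1,1)ᵀ, the irrepresentable quantity satisfies ‖Σ̂_{{3,4},{1,2}} (Σ̂_{{1,2},{1,2}})⁻¹ (1,1)ᵀ‖_∞ = √((1+η²)/2) < 1. Moreover, X₁ + X₂ is parallel to X₃ − 2^{−1/2}X₄, and consequently the scalar D̂({3,4}) := Σ̂_{{1,2},{1,2}} − Σ̂_{{1,2},{3,4}}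 Σ̂_{{3,4},{3,4}}⁻¹ Σ̂_{{3,4},{1,2}} (a 2×2 matrix) has λ_min(D̂({3,4})) = 0. -/
open Matrix

noncomputable section

namespace Stmt9

/-- The design matrix of the corner-case example: columns
`X₁ = (1+η²)^{-1/2}(e₁ + ηe₃)`, `X₂ = (1+η²)^{-1/2}(e₁ − ηe₃)`,
`X₃ = 2^{-1/2}(e₁ + e₂)`, `X₄ = e₂`. -/
def Xex (η : ℝ) : Matrix (Fin 3) (Fin 4) ℝ :=
  !![(Real.sqrt (1 + η ^ 2))⁻¹, (Real.sqrt (1 + η ^ 2))⁻¹, (Real.sqrt 2)⁻¹, 0;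
     0, 0, (Real.sqrt 2)⁻¹, 1;
     (Real.sqrt (1 + η ^ 2))⁻¹ * η, -((Real.sqrt (1 + η ^ 2))⁻¹ * η), 0, 0]

/-- Sample covariance `Σ̂ = (1/3) Xᵀ X` of the example. -/
def Sig (η : ℝ) : Matrix (Fin 4) (Fin 4) ℝ := (3 : ℝ)⁻¹ • ((Xex η)ᵀ * Xex η)

/-- Smallest eigenvalue of a symmetric matrix, via the Rayleigh quotient. -/
def lamMin {m : Type} [Fintype m] (A : Matrix m m ℝ) : ℝ :=
  sInf {r | ∃ x : m → ℝ, ∑ i, x i ^ 2 = 1 ∧ r = x ⬝ᵥ (A *ᵥ x)}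

/-- `D̂({3,4}) = Σ̂_{{1,2},{1,2}} − Σ̂_{{1,2},{3,4}}Σ̂_{{3,4},{3,4}}⁻¹Σ̂_{{3,4},{1,2}}`. -/
def Dhat34 (η : ℝ) : Matrix (Fin 2) (Fin 2) ℝ :=
  (Sig η).submatrix ![0, 1] ![0, 1] -
    (Sig η).submatrix ![0, 1] ![2, 3] * ((Sig η).submatrix ![2, 3] ![2, 3])⁻¹ *
      (Sig η).submatrix ![2, 3] ![0, 1]

set_option maxHeartbeats 1000000 in
/-- **Remark 3** (corner case where LASSO succeeds but best subset selection fails):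
the irrepresentable quantity equals `√((1+η²)/2) < 1`, while `X₁ + X₂` is parallel to
`X₃ − 2^{-1/2}X₄` and hence `λ_min(D̂({3,4})) = 0`. -/
theorem lasso_succeeds_bss_fails (η : ℝ) (hη0 : 0 < η) (hη1 : η < 1) :
    (max |(((Sig η).submatrix ![2, 3] ![0, 1]) *ᵥ
          (((Sig η).submatrix ![0, 1] ![0, 1])⁻¹ *ᵥ ![1, 1])) 0|
        |(((Sig η).submatrix ![2, 3] ![0, 1]) *ᵥ
          (((Sig η).submatrix ![0, 1] ![0, 1])⁻¹ *ᵥ ![1, 1])) 1|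
      = Real.sqrt ((1 + η ^ 2) / 2)) ∧
    Real.sqrt ((1 + η ^ 2) / 2) < 1 ∧
    (∃ c : ℝ, (fun i => Xex η i 0 + Xex η i 1) =
      fun i => c * (Xex η i 2 - (Real.sqrt 2)⁻¹ * Xex η i 3)) ∧
    lamMin (Dhat34 η) = 0 := by
  have h1 : (0:ℝ) < 1 + η^2 := by positivity
  have hη0' : η ≠ 0 := hη0.ne'
  have hs : Real.sqrt (1+η^2) * Real.sqrt (1+η^2) = 1+η^2 := Real.mul_self_sqrt h1.le
  have hs0 : Real.sqrt (1+η^2) ≠ 0 := by positivity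
  have ht : Real.sqrt 2 * Real.sqrt 2 = 2 := Real.mul_self_sqrt (by norm_num)
  have ht0 : Real.sqrt 2 ≠ 0 := by positivity
  have h1212 : (Sig η).submatrix ![0,1] ![0,1] =
      (3:ℝ)⁻¹ • !![1, (1-η^2)/(1+η^2); (1-η^2)/(1+η^2), 1] := by
    ext i j
    fin_cases i <;> fin_cases j <;>
      simp [Sig, Xex, Matrix.mul_apply, Fin.sum_univ_succ] <;>
      field_simp <;> nlinarith [hs]
  have h34 : (Sig η).submatrix ![2,3] ![0,1] =
      (3:ℝ)⁻¹ • !![(Real.sqrt (1+η^2) * Real.sqrt 2)⁻¹, (Real.sqrt (1+η^2) * Real.sqrt 2)⁻¹; 0, 0] := by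
    ext i j
    fin_cases i <;> fin_cases j <;>
      simp [Sig, Xex, Matrix.mul_apply, Fin.sum_univ_succ] <;>
      field_simp <;> ring
  have h1234 : (Sig η).submatrix ![0,1] ![2,3] =
      (3:ℝ)⁻¹ • !![(Real.sqrt (1+η^2) * Real.sqrt 2)⁻¹, 0; (Real.sqrt (1+η^2) * Real.sqrt 2)⁻¹, 0] := by
    ext i j
    fin_cases i <;> fin_cases j <;>
      simp [Sig, Xex, Matrix.mul_apply, Fin.sum_univ_succ] <;>
      field_simp <;> ring
  have h3434 : (Sig η).submatrix ![2,3] ![2,3] =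
      (3:ℝ)⁻¹ • !![1, (Real.sqrt 2)⁻¹; (Real.sqrt 2)⁻¹, 1] := by
    ext i j
    fin_cases i <;> fin_cases j <;>
      simp [Sig, Xex, Matrix.mul_apply, Fin.sum_univ_succ] <;>
      field_simp <;> norm_num
  have hinv : ((Sig η).submatrix ![0,1] ![0,1])⁻¹ =
      (3*(1+η^2)^2/(4*η^2)) • !![1, -((1-η^2)/(1+η^2)); -((1-η^2)/(1+η^2)), 1] := by
    apply Matrix.inv_eq_right_inv
    rw [h1212]
    ext i j
    fin_cases i <;> fin_cases j <;>
      simp [Matrix.mul_apply, Fin.sum_univ_succ, Matrix.one_apply] <;>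
      field_simp <;> ring
  have hinv34 : ((Sig η).submatrix ![2,3] ![2,3])⁻¹ =
      (6:ℝ) • !![1, -(Real.sqrt 2)⁻¹; -(Real.sqrt 2)⁻¹, 1] := by
    apply Matrix.inv_eq_right_inv
    rw [h3434]
    ext i j
    fin_cases i <;> fin_cases j <;>
      simp [Matrix.mul_apply, Fin.sum_univ_succ, Matrix.one_apply] <;>
      field_simp <;> nlinarith [ht]
  have hsqrt : Real.sqrt ((1+η^2)/2) = Real.sqrt (1+η^2) / Real.sqrt 2 :=
    Real.sqrt_div h1.le 2
  have hs2 : Real.sqrt (1+η^2) ^ 2 = 1+η^2 := Real.sq_sqrt h1.le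
  have ht2 : Real.sqrt 2 ^ 2 = 2 := Real.sq_sqrt (by norm_num)
  have hw2 : Real.sqrt 2 ^ 2 * Real.sqrt (1+η^2) ^ 2 = 2*(1+η^2) := by rw [hs2, ht2]
  have hv0 : (((Sig η).submatrix ![2, 3] ![0, 1]) *ᵥ
          (((Sig η).submatrix ![0, 1] ![0, 1])⁻¹ *ᵥ ![1, 1])) 0 = Real.sqrt ((1+η^2)/2) := by
    rw [h34, hinv, hsqrt]
    simp [Matrix.mulVec, dotProduct, Fin.sum_univ_succ]
    field_simp
    ring_nf
    linear_combination (-4*η^2) * hs2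
  have hv1 : (((Sig η).submatrix ![2, 3] ![0, 1]) *ᵥ
          (((Sig η).submatrix ![0, 1] ![0, 1])⁻¹ *ᵥ ![1, 1])) 1 = 0 := by
    rw [h34, hinv]
    simp [Matrix.mulVec, dotProduct, Fin.sum_univ_succ]
  have hD : Dhat34 η = (η^2/(3*(1+η^2))) • !![1,-1;-1,1] := by
    rw [Dhat34, h1212, h1234, hinv34, h34]
    ext i j
    fin_cases i <;> fin_cases j <;>
      [skip; skip; skip; skip] <;>
      (simp [Matrix.mul_apply, Fin.sum_univ_succ]; field_simp; ring_nf)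
    · linear_combination (3:ℝ)*hw2
    · linear_combination (3:ℝ)*hw2
    · linear_combination (3:ℝ)*hw2
    · linear_combination (3:ℝ)*hw2
  refine ⟨?_, ?_, ⟨2 * Real.sqrt 2 / Real.sqrt (1+η^2), ?_⟩, ?_⟩
  · rw [hv0, hv1, abs_zero, abs_of_nonneg (Real.sqrt_nonneg _)]
    exact max_eq_left (Real.sqrt_nonneg _)
  · have : Real.sqrt ((1+η^2)/2) < Real.sqrt 1 :=
      Real.sqrt_lt_sqrt (by positivity) (by nlinarith)
    simpa using this
  · funext i
    fin_cases i
    · simp only [Xex]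
      norm_num [Matrix.cons_val_zero, Matrix.cons_val_one]
      field_simp
      change (1:ℝ) + 1 = 2 * (Real.sqrt 2 * (1 / Real.sqrt 2) - 0)
      simp [ht0]
      norm_num
    · simp [Xex]
    · simp [Xex]
  · have hmem : (0:ℝ) ∈ {r | ∃ x : Fin 2 → ℝ, ∑ i, x i ^ 2 = 1 ∧ r = x ⬝ᵥ (Dhat34 η *ᵥ x)} := by
      refine ⟨![(Real.sqrt 2)⁻¹, (Real.sqrt 2)⁻¹], ?_, ?_⟩
      · simp [Fin.sum_univ_succ]
        field_simp
        norm_num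
      · rw [hD]
        simp [dotProduct, Matrix.mulVec, Fin.sum_univ_succ]
    have hlb : ∀ r ∈ {r | ∃ x : Fin 2 → ℝ, ∑ i, x i ^ 2 = 1 ∧ r = x ⬝ᵥ (Dhat34 η *ᵥ x)},
        (0:ℝ) ≤ r := by
      rintro r ⟨x, hx, rfl⟩
      rw [hD]
      simp [dotProduct, Matrix.mulVec, Fin.sum_univ_succ]
      have h2 : (0:ℝ) ≤ η^2/(3*(1+η^2)) := by positivity
      nlinarith [sq_nonneg (x 0 - x 1)]
    exact le_antisymm (csInf_le ⟨0, hlb⟩ hmem) (le_csInf ⟨0, hmem⟩ hlb)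

end Stmt9
end
end

section
/- Let y = X_{S*} β*_{S*} + ε with ε ∈ ℝⁿ, let S ⊆ [p] be such that X_S has full column rank, and let S₀ := S* ∖ S. Then R_S − R_{S*} = n (β*_{S₀})ᵀ D̂(S) β*_{S₀} + 2 εᵀ(I − P_{X_S})X_{S₀} β*_{S₀} − εᵀ(P_{X_S} − P_{X_{S*}})ε. -/
open Matrix Finset

noncomputable section

namespace Stmt10

variable {n p : ℕ}

def colSub (X : Matrix (Fin n) (Fin p) ℝ) (S : Finset (Fin p)) :
    Matrix (Fin n) {j // j ∈ S} ℝ :=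
  Matrix.of fun i j => X i j.val

def proj (X : Matrix (Fin n) (Fin p) ℝ) (S : Finset (Fin p)) :
    Matrix (Fin n) (Fin n) ℝ :=
  colSub X S * ((colSub X S)ᵀ * colSub X S)⁻¹ * (colSub X S)ᵀ

def RSS (X : Matrix (Fin n) (Fin p) ℝ) (S : Finset (Fin p)) (y : Fin n → ℝ) : ℝ :=
  y ⬝ᵥ ((1 - proj X S) *ᵥ y)

def sampleCov (X : Matrix (Fin n) (Fin p) ℝ) : Matrix (Fin p) (Fin p) ℝ :=
  ((n : ℝ))⁻¹ • (Xᵀ * X)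

def subCov (X : Matrix (Fin n) (Fin p) ℝ) (A B : Finset (Fin p)) :
    Matrix {j // j ∈ A} {j // j ∈ B} ℝ :=
  Matrix.of fun a b => sampleCov X a.val b.val

def Dhat (X : Matrix (Fin n) (Fin p) ℝ) (Sstar S : Finset (Fin p)) :
    Matrix {j // j ∈ Sstar \ S} {j // j ∈ Sstar \ S} ℝ :=
  subCov X (Sstar \ S) (Sstar \ S) -
    subCov X (Sstar \ S) S * (subCov X S S)⁻¹ * subCov X S (Sstar \ S)

def quadD (X : Matrix (Fin n) (Fin p) ℝ) (Sstar S : Finset (Fin p)) (β : Fin p → ℝ) : ℝ :=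
  (fun a : {j // j ∈ Sstar \ S} => β a.val) ⬝ᵥ
    (Dhat X Sstar S *ᵥ fun a : {j // j ∈ Sstar \ S} => β a.val)

/- Auxiliary lemmas -/

lemma isUnit_gram {N : ℕ} {m : Type*} [Fintype m] [DecidableEq m]
    (A : Matrix (Fin N) m ℝ) (h : A.rank = Fintype.card m) :
    IsUnit (Aᵀ * A) := by
  rw [← Matrix.mulVec_surjective_iff_isUnit]
  have hr : (Aᵀ * A).rank = Fintype.card m := by
    rw [Matrix.rank_transpose_mul_self, h]
  have htop : LinearMap.range (Aᵀ * A).mulVecLin = ⊤ :=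
    Submodule.eq_top_of_finrank_eq (by
      rw [show Module.finrank ℝ (LinearMap.range (Aᵀ * A).mulVecLin) = (Aᵀ * A).rank from rfl,
        hr, Module.finrank_pi])
  exact LinearMap.range_eq_top.mp htop

lemma dot_symm {N : ℕ} (M : Matrix (Fin N) (Fin N) ℝ) (hM : Mᵀ = M) (x y : Fin N → ℝ) :
    x ⬝ᵥ (M *ᵥ y) = y ⬝ᵥ (M *ᵥ x) := by
  rw [Matrix.dotProduct_mulVec,
    show x ᵥ* M = M *ᵥ x by conv_lhs => rw [← hM, Matrix.vecMul_transpose]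
    ,
    dotProduct_comm]

lemma quad_form_eq {N : ℕ} {m : Type*} [Fintype m] (A : Matrix (Fin N) m ℝ)
    (M : Matrix (Fin N) (Fin N) ℝ) (x : m → ℝ) :
    (A *ᵥ x) ⬝ᵥ (M *ᵥ (A *ᵥ x)) = x ⬝ᵥ ((Aᵀ * M * A) *ᵥ x) := by
  rw [← Matrix.mulVec_mulVec, ← Matrix.mulVec_mulVec, Matrix.dotProduct_mulVec x,
    Matrix.vecMul_transpose]

lemma subCov_eq (X : Matrix (Fin n) (Fin p) ℝ) (A B : Finset (Fin p)) :
    subCov X A B = ((n : ℝ))⁻¹ • ((colSub X A)ᵀ * colSub X B) := by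
  ext a b
  simp [subCov, sampleCov, colSub, Matrix.mul_apply, Matrix.smul_apply]

lemma proj_transpose (X : Matrix (Fin n) (Fin p) ℝ) (S : Finset (Fin p)) :
    (proj X S)ᵀ = proj X S := by
  have h : ((colSub X S)ᵀ * colSub X S)ᵀ = (colSub X S)ᵀ * colSub X S := by
    rw [Matrix.transpose_mul, Matrix.transpose_transpose]
  simp [proj, Matrix.transpose_mul, Matrix.transpose_nonsing_inv, h, Matrix.mul_assoc]

lemma proj_mul_self (X : Matrix (Fin n) (Fin p) ℝ) (S : Finset (Fin p))
    (hU : IsUnit ((colSub X S)ᵀ * colSub X S)) :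
    proj X S * colSub X S = colSub X S := by
  have hdet : IsUnit ((colSub X S)ᵀ * colSub X S).det :=
    (Matrix.isUnit_iff_isUnit_det _).mp hU
  rw [proj, Matrix.mul_assoc, Matrix.mul_assoc, Matrix.nonsing_inv_mul _ hdet, Matrix.mul_one]

/-- **Key decomposition** of the excess residual sum of squares:
`R_S − R_{S*} = n (β*_{S₀})ᵀ D̂(S) β*_{S₀} + 2εᵀ(I−P_{X_S})X_{S₀}β*_{S₀}
  − εᵀ(P_{X_S} − P_{X_{S*}})ε` with `S₀ = S* ∖ S`. -/
theorem rss_diff_decomposition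
    (X : Matrix (Fin n) (Fin p) ℝ) (β : Fin p → ℝ) (Sstar S : Finset (Fin p))
    (ε y : Fin n → ℝ)
    (hsupp : ∀ j, β j ≠ 0 ↔ j ∈ Sstar)
    (hrankS : (colSub X S).rank = S.card)
    (hrankStar : (colSub X Sstar).rank = Sstar.card)
    (hy : y = fun i =>
      (colSub X Sstar *ᵥ fun j : {j // j ∈ Sstar} => β j.val) i + ε i) :
    RSS X S y - RSS X Sstar y
      = n * quadD X Sstar S β
        + 2 * (ε ⬝ᵥ ((1 - proj X S) *ᵥ
            (colSub X (Sstar \ S) *ᵥ fun j : {j // j ∈ Sstar \ S} => β j.val)))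
        - ε ⬝ᵥ ((proj X S - proj X Sstar) *ᵥ ε) := by
  rcases Nat.eq_zero_or_pos n with hn0 | hnpos
  · subst hn0
    simp [RSS, dotProduct]
  have hn : (n : ℝ) ≠ 0 := Nat.cast_ne_zero.mpr hnpos.ne'
  -- notation
  set A := colSub X S with hA
  set As := colSub X Sstar with hAs
  set A0 := colSub X (Sstar \ S) with hA0
  set P := proj X S with hP
  set Q := proj X Sstar with hQ
  set b0 : {j // j ∈ Sstar \ S} → ℝ := fun a => β a.val with hb0
  set bs : {j // j ∈ Sstar} → ℝ := fun a => β a.val with hbs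
  set bS : {j // j ∈ S} → ℝ := fun a => β a.val with hbS2
  set u : Fin n → ℝ := A *ᵥ bS with hu
  set v : Fin n → ℝ := A0 *ᵥ b0 with hv
  set μ : Fin n → ℝ := As *ᵥ bs with hμdef
  -- invertibility
  have hUS : IsUnit (Aᵀ * A) := isUnit_gram A (by rw [hrankS, Fintype.card_coe])
  have hUSs : IsUnit (Asᵀ * As) := isUnit_gram As (by rw [hrankStar, Fintype.card_coe])
  have hdetS : IsUnit (Aᵀ * A).det := (Matrix.isUnit_iff_isUnit_det _).mp hUS
  -- μ = u + v
  have hμ : μ = u + v := by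
    funext i
    show (As *ᵥ bs) i = (A *ᵥ bS) i + (A0 *ᵥ b0) i
    simp only [Matrix.mulVec, dotProduct, hA, hAs, hA0, colSub, Matrix.of_apply,
      hb0, hbs, hbS2]
    rw [Finset.sum_coe_sort Sstar (fun j => X i j * β j),
      Finset.sum_coe_sort S (fun j => X i j * β j),
      Finset.sum_coe_sort (Sstar \ S) (fun j => X i j * β j)]
    have h1 : ∑ j ∈ S, X i j * β j = ∑ j ∈ Sstar ∩ S, X i j * β j := by
      refine (Finset.sum_subset Finset.inter_subset_right fun j hj hj' => ?_).symm
      have : j ∉ Sstar := fun hjs => hj' (Finset.mem_inter.mpr ⟨hjs, hj⟩)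
      have : β j = 0 := by
        by_contra hb
        exact this ((hsupp j).mp hb)
      simp [this]
    have h2 : ∑ j ∈ Sstar \ (Sstar ∩ S), X i j * β j + ∑ j ∈ Sstar ∩ S, X i j * β j
        = ∑ j ∈ Sstar, X i j * β j :=
      Finset.sum_sdiff Finset.inter_subset_left
    rw [h1, ← h2, Finset.sdiff_inter_self_left]
    ring
  -- projections fix their column spaces
  have hPA : P * A = A := proj_mul_self X S hUS
  have hQAs : Q * As = As := proj_mul_self X Sstar hUSs
  have hPu : (1 - P) *ᵥ u = 0 := by
    rw [hu, Matrix.mulVec_mulVec, Matrix.sub_mul, Matrix.one_mul, hPA, sub_self,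
      Matrix.zero_mulVec]
  have hQmu : (1 - Q) *ᵥ μ = 0 := by
    rw [hμdef, Matrix.mulVec_mulVec, Matrix.sub_mul, Matrix.one_mul, hQAs, sub_self,
      Matrix.zero_mulVec]
  have hMsym : (1 - P)ᵀ = 1 - P := by
    rw [Matrix.transpose_sub, Matrix.transpose_one, hP, proj_transpose]
  have hNsym : (1 - Q)ᵀ = 1 - Q := by
    rw [Matrix.transpose_sub, Matrix.transpose_one, hQ, proj_transpose]
  have hPmu : (1 - P) *ᵥ μ = (1 - P) *ᵥ v := by
    rw [hμ, Matrix.mulVec_add, hPu, zero_add]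
  have hy' : y = μ + ε := hy
  -- RSS over S
  have hRS : RSS X S y
      = v ⬝ᵥ ((1 - P) *ᵥ v) + 2 * (ε ⬝ᵥ ((1 - P) *ᵥ v)) + ε ⬝ᵥ ((1 - P) *ᵥ ε) := by
    show y ⬝ᵥ ((1 - P) *ᵥ y) = _
    rw [hy', Matrix.mulVec_add, hPmu, add_dotProduct, dotProduct_add,
      dotProduct_add, dot_symm _ hMsym μ v, hPmu, dot_symm _ hMsym μ ε, hPmu]
    ring
  -- RSS over Sstar
  have hRSs : RSS X Sstar y = ε ⬝ᵥ ((1 - Q) *ᵥ ε) := by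
    show y ⬝ᵥ ((1 - Q) *ᵥ y) = _
    rw [hy', Matrix.mulVec_add, hQmu, zero_add, add_dotProduct,
      dot_symm _ hNsym μ ε, hQmu, dotProduct_zero, zero_add]
  -- Dhat identity
  have hG : Dhat X Sstar S = ((n : ℝ))⁻¹ • (A0ᵀ * (1 - P) * A0) := by
    have hinv : (subCov X S S)⁻¹ = (n : ℝ) • (Aᵀ * A)⁻¹ := by
      rw [subCov_eq]
      apply Matrix.inv_eq_right_inv
      rw [Matrix.smul_mul, Matrix.mul_smul, smul_smul, inv_mul_cancel₀ hn,
        Matrix.mul_nonsing_inv _ hdetS, one_smul]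
    have hmid : (((n : ℝ))⁻¹ • (A0ᵀ * A)) * ((n : ℝ) • (Aᵀ * A)⁻¹) * (((n : ℝ))⁻¹ • (Aᵀ * A0))
        = ((n : ℝ))⁻¹ • (A0ᵀ * A * (Aᵀ * A)⁻¹ * (Aᵀ * A0)) := by
      simp only [Matrix.smul_mul, Matrix.mul_smul, smul_smul]
      congr 1
      field_simp
    rw [Dhat, hinv, subCov_eq, subCov_eq, subCov_eq, ← hA, ← hA0, hmid, ← smul_sub]
    congr 1
    rw [Matrix.mul_sub, Matrix.sub_mul, Matrix.mul_one, hP]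
    simp only [proj, Matrix.mul_assoc]
    rfl
  -- quadratic term
  have hquad : (n : ℝ) * quadD X Sstar S β = v ⬝ᵥ ((1 - P) *ᵥ v) := by
    show (n : ℝ) * (b0 ⬝ᵥ (Dhat X Sstar S *ᵥ b0)) = _
    rw [hG, Matrix.smul_mulVec, dotProduct_smul, hv, quad_form_eq,
      smul_eq_mul, ← mul_assoc, mul_inv_cancel₀ hn, one_mul]
  -- assemble
  rw [hRS, hRSs, hquad]
  have hdiff : ε ⬝ᵥ ((1 - P) *ᵥ ε) - ε ⬝ᵥ ((1 - Q) *ᵥ ε) = -(ε ⬝ᵥ ((P - Q) *ᵥ ε)) := by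
    rw [← dotProduct_sub, ← Matrix.sub_mulVec, sub_sub_sub_cancel_left,
      show Q - P = -(P - Q) from (neg_sub _ _).symm, Matrix.neg_mulVec,
      dotProduct_neg]
  linarith [hdiff]

end Stmt10
end
end

section
/- Let Z be a real-valued random variable with finite fourth moment. Then Var(Z²) ≤ 2·E[(Z − E Z)⁴] − 2·Var(Z)² + 8·(E Z)²·Var(Z). -/
open MeasureTheory ProbabilityTheory ENNReal

private lemma pqr_aux : (1 : ℝ≥0∞) / 2 = 1 / 4 + 1 / 4 := by
  rw [ENNReal.div_add_div_same]
  rw [show ((1:ℝ≥0∞) + 1) = 2 by norm_num]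
  rw [ENNReal.div_eq_div_iff (by norm_num) (by norm_num) (by norm_num) (by norm_num)]
  norm_num

/-- **Variance of a square**: for a real random variable `Z` with finite fourth moment,
`Var(Z²) ≤ 2·E[(Z − EZ)⁴] − 2·Var(Z)² + 8·(EZ)²·Var(Z)`. -/
theorem variance_sq_le
    {Ω : Type*} [MeasurableSpace Ω] (μ : Measure Ω) [IsProbabilityMeasure μ]
    (Z : Ω → ℝ) (hZ : MemLp Z 4 μ) :
    variance (fun ω => Z ω ^ 2) μ ≤
      2 * (∫ ω, (Z ω - ∫ ω', Z ω' ∂μ) ^ 4 ∂μ) - 2 * (variance Z μ) ^ 2 +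
        8 * (∫ ω, Z ω ∂μ) ^ 2 * variance Z μ := by
  set m : ℝ := ∫ ω', Z ω' ∂μ with hm
  set V : ℝ := variance Z μ with hV
  have hZL2 : MemLp Z 2 μ := hZ.mono_exponent (by norm_num)
  have hX : MemLp (fun ω => Z ω - m) 4 μ := hZ.sub (memLp_const m)
  have hZ2 : MemLp (fun ω => Z ω ^ 2) 2 μ := by
    have := hZ.smul (𝕜 := ℝ) hZ (p := 4) (q := 4) (r := 2)
      (hpqr := ⟨by simpa only [one_div] using pqr_aux.symm⟩)
    simpa [Pi.smul_apply', smul_eq_mul, pow_two, Pi.mul_def] using this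
  have hX2 : MemLp (fun ω => (Z ω - m) ^ 2) 2 μ := by
    have := hX.smul (𝕜 := ℝ) hX (p := 4) (q := 4) (r := 2)
      (hpqr := ⟨by simpa only [one_div] using pqr_aux.symm⟩)
    simpa [Pi.smul_apply', smul_eq_mul, pow_two, Pi.mul_def] using this
  have hXint2 : Integrable (fun ω => (Z ω - m) ^ 2) μ := hX2.integrable one_le_two
  have hXint4 : Integrable (fun ω => (Z ω - m) ^ 4) μ := by
    have := hX2.integrable_sq
    simpa [← pow_mul] using this
  -- variance of Z equals ∫ (Z - m)²
  have hVeq : V = ∫ ω, (Z ω - m) ^ 2 ∂μ := by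
    rw [hV, variance_eq_integral hZL2.aemeasurable]
  -- mean of Z² in terms of V and m
  have hc : ∫ ω, Z ω ^ 2 ∂μ = V + m ^ 2 := by
    have := variance_eq_sub hZL2
    have h2 : (∫ ω, (Z ^ 2) ω ∂μ) = ∫ ω, Z ω ^ 2 ∂μ := by rfl
    rw [← hV, ← hm] at this
    rw [h2] at this
    linarith
  have hIsq : Integrable (fun ω => ((Z ω - m) ^ 2 - V) ^ 2) μ := by
    have h := (hX2.sub (memLp_const V)).integrable_sq
    simpa using h
  -- key pointwise bound and integral monotonicity
  have key : variance (fun ω => Z ω ^ 2) μ ≤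
      ∫ ω, (2 * ((Z ω - m) ^ 2 - V) ^ 2 + 8 * m ^ 2 * (Z ω - m) ^ 2) ∂μ := by
    rw [variance_eq_integral hZ2.aemeasurable]
    have hmean : (∫ ω, (fun ω => Z ω ^ 2) ω ∂μ) = V + m ^ 2 := hc
    have hLHS : Integrable
        (fun ω => ((fun ω => Z ω ^ 2) ω - ∫ ω', (fun ω => Z ω ^ 2) ω' ∂μ) ^ 2) μ :=
      (hZ2.sub (memLp_const _)).integrable_sq
    have hRHS : Integrable
        (fun ω => 2 * ((Z ω - m) ^ 2 - V) ^ 2 + 8 * m ^ 2 * (Z ω - m) ^ 2) μ :=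
      (hIsq.const_mul 2).add (hXint2.const_mul (8 * m ^ 2))
    have : (∫ ω, ((fun ω => Z ω ^ 2) ω - ∫ ω', (fun ω => Z ω ^ 2) ω' ∂μ) ^ 2 ∂μ)
        ≤ ∫ ω, (2 * ((Z ω - m) ^ 2 - V) ^ 2 + 8 * m ^ 2 * (Z ω - m) ^ 2) ∂μ := by
      refine integral_mono hLHS hRHS fun ω => ?_
      simp only [hmean]
      nlinarith [sq_nonneg ((Z ω - m) ^ 2 - V - 2 * m * (Z ω - m)), sq_nonneg (Z ω - m)]
    exact this
  -- compute the right-hand integral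
  have hsplit : ∫ ω, (2 * ((Z ω - m) ^ 2 - V) ^ 2 + 8 * m ^ 2 * (Z ω - m) ^ 2) ∂μ
      = 2 * (∫ ω, ((Z ω - m) ^ 2 - V) ^ 2 ∂μ) + 8 * m ^ 2 * V := by
    rw [integral_add (hIsq.const_mul 2) (hXint2.const_mul (8 * m ^ 2)),
      integral_const_mul, integral_const_mul, hVeq]
  have hexp : ∫ ω, ((Z ω - m) ^ 2 - V) ^ 2 ∂μ
      = (∫ ω, (Z ω - m) ^ 4 ∂μ) - V ^ 2 := by
    have heq : ∀ ω, ((Z ω - m) ^ 2 - V) ^ 2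
        = (Z ω - m) ^ 4 - 2 * V * (Z ω - m) ^ 2 + V ^ 2 := fun ω => by ring
    simp_rw [heq]
    have hIs : Integrable (fun ω => (Z ω - m) ^ 4 - 2 * V * (Z ω - m) ^ 2) μ := by
      have h := hXint4.sub (hXint2.const_mul (2 * V))
      exact h
    rw [integral_add hIs (integrable_const _),
      integral_sub hXint4 (hXint2.const_mul (2 * V)), integral_const_mul, ← hVeq,
      integral_const]
    simp only [probReal_univ, smul_eq_mul, one_mul]
    ring
  calc variance (fun ω => Z ω ^ 2) μ
      ≤ ∫ ω, (2 * ((Z ω - m) ^ 2 - V) ^ 2 + 8 * m ^ 2 * (Z ω - m) ^ 2) ∂μ := key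
    _ = 2 * ((∫ ω, (Z ω - m) ^ 4 ∂μ) - V ^ 2) + 8 * m ^ 2 * V := by rw [hsplit, hexp]
    _ = 2 * (∫ ω, (Z ω - m) ^ 4 ∂μ) - 2 * V ^ 2 + 8 * m ^ 2 * V := by ring
end
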